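/- If H over a countable example space X satisfies the UUS property and there exists a non-decreasing sequence of uniformly generatable classes H₁ ⊆ H₂ ⊆ ... with H = ⋃_{n ∈ ℕ} H_n, then H is non-uniformly generatable. -/
import Mathlib


open Set

variable {X : Type*}

/-- The set of distinct examples seen in the first `t` steps of the stream `x`. -/
def seenSet (x : ℕ → X) (t : ℕ) : Set X := x '' {i | i < t}

/-- The finite prefix `x₁, ..., x_t` of the stream, as a list. -/
def prefList (x : ℕ → X) (t : ℕ) : List X := List.ofFn (fun i : Fin t => x i)

/-- The version space of `H` induced by the positive examples `S`. -/
def versionSpace (H : Set (Set X)) (S : Set X) : Set (Set X) := {h | h ∈ H ∧ S ⊆ h}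

/-- The closure `⟨S⟩_H`: common positive examples of all consistent hypotheses. -/
def hclosure (H : Set (Set X)) (S : Set X) : Set X := ⋂₀ versionSpace H S

/-- There exist `d` distinct examples with nonempty version space and finite closure. -/
def FinClosureWitness (H : Set (Set X)) (d : ℕ) : Prop :=
  ∃ S : Finset X, S.card = d ∧ (versionSpace H ↑S).Nonempty ∧ (hclosure H ↑S).Finite

/-- The Closure dimension of `H` is infinite. -/
def ClosureDimInf (H : Set (Set X)) : Prop := ∀ n : ℕ, ∃ d, n ≤ d ∧ FinClosureWitness H d

/-- The Closure dimension of `H` is at most `d`. -/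
def ClosureDimLE (H : Set (Set X)) (d : ℕ) : Prop := ∀ d', d < d' → ¬ FinClosureWitness H d'

/-- Uniformly Unbounded Support property. -/
def UUS (H : Set (Set X)) : Prop := ∀ h ∈ H, h.Infinite

/-- The generator `G` outputs an unseen positive example of `h` at step `s`. -/
def GenOK (G : List X → X) (h : Set X) (x : ℕ → X) (s : ℕ) : Prop :=
  G (prefList x s) ∈ h \ seenSet x s

def UniformlyGeneratable (H : Set (Set X)) : Prop :=
  ∃ G : List X → X, ∃ d : ℕ, ∀ h ∈ H, ∀ x : ℕ → X, (∀ i, x i ∈ h) →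
    ∀ t, (seenSet x t).ncard = d → ∀ s, t ≤ s → GenOK G h x s

def NonUniformlyGeneratable (H : Set (Set X)) : Prop :=
  ∃ G : List X → X, ∀ h ∈ H, ∃ d : ℕ, ∀ x : ℕ → X, (∀ i, x i ∈ h) →
    ∀ t, (seenSet x t).ncard = d → ∀ s, t ≤ s → GenOK G h x s

/-- `x` is an enumeration of the support `h`. -/
def IsEnum (h : Set X) (x : ℕ → X) : Prop := (∀ i, x i ∈ h) ∧ ∀ y ∈ h, ∃ i, x i = y

def GeneratableInLimit (H : Set (Set X)) : Prop :=
  ∃ G : List X → X, ∀ h ∈ H, ∀ x : ℕ → X, IsEnum h x →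
    ∃ t, ∀ s, t ≤ s → GenOK G h x s

/-- Discrete intermediate value: a function starting at 0 and increasing by at
most 1 per step hits every value below its current value. -/
lemma aux_ivt (f : ℕ → ℕ) (h0 : f 0 = 0) (hstep : ∀ t, f (t + 1) ≤ f t + 1) :
    ∀ s d, d ≤ f s → ∃ t, t ≤ s ∧ f t = d := by
  intro s
  induction s with
  | zero => intro d hd; exact ⟨0, le_refl 0, by omega⟩
  | succ s ih =>
    intro d hd
    by_cases hc : d ≤ f s
    · obtain ⟨t, ht, hft⟩ := ih d hc
      exact ⟨t, ht.trans (Nat.le_succ s), hft⟩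
    · exact ⟨s + 1, le_refl _, by have := hstep s; omega⟩

lemma aux_seen_eq [DecidableEq X] (x : ℕ → X) (s : ℕ) :
    seenSet x s = ↑(prefList x s).toFinset := by
  ext y
  simp only [seenSet, prefList, Finset.coe_sort_coe, List.coe_toFinset, List.mem_ofFn,
    Set.mem_image, Set.mem_setOf_eq]
  constructor
  · rintro ⟨i, hi, rfl⟩; exact ⟨⟨i, hi⟩, rfl⟩
  · rintro ⟨⟨i, hi⟩, rfl⟩; exact ⟨i, hi, rfl⟩

lemma aux_seen_finite (x : ℕ → X) (s : ℕ) : (seenSet x s).Finite := by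
  have : ({i | i < s} : Set ℕ).Finite := Set.finite_Iio s
  exact this.image x

lemma aux_seen_mono (x : ℕ → X) {t s : ℕ} (h : t ≤ s) :
    (seenSet x t).ncard ≤ (seenSet x s).ncard := by
  apply Set.ncard_le_ncard _ (aux_seen_finite x s)
  exact Set.image_mono (fun i (hi : i < t) => lt_of_lt_of_le hi h)

lemma aux_seen_step (x : ℕ → X) (t : ℕ) :
    (seenSet x (t + 1)).ncard ≤ (seenSet x t).ncard + 1 := by
  have : seenSet x (t + 1) = insert (x t) (seenSet x t) := by
    ext y
    simp only [seenSet, Set.mem_image, Set.mem_setOf_eq, Set.mem_insert_iff]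
    constructor
    · rintro ⟨i, hi, rfl⟩
      rcases Nat.lt_succ_iff_lt_or_eq.mp hi with hi | rfl
      · exact Or.inr ⟨i, hi, rfl⟩
      · exact Or.inl rfl
    · rintro (rfl | ⟨i, hi, rfl⟩)
      · exact ⟨t, Nat.lt_succ_self t, rfl⟩
      · exact ⟨i, hi.trans (Nat.lt_succ_self t), rfl⟩
  rw [this]
  exact Set.ncard_insert_le _ _

/-- a non-decreasing union of uniformly generatable classes is
non-uniformly generatable. -/
theorem stmt6 {X : Type*} [Countable X] (H : Set (Set X)) (Hs : ℕ → Set (Set X))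
    (hUUS : UUS H) (hmono : Monotone Hs) (hun : (⋃ n, Hs n) = H)
    (hunif : ∀ n, UniformlyGeneratable (Hs n)) :
    NonUniformlyGeneratable H := by
  classical
  choose G d hGd using hunif
  -- for a list with k distinct elements, use generator `G (m k)`
  set m : ℕ → ℕ := fun k => Nat.findGreatest (fun n => d n ≤ k) k with hm
  refine ⟨fun l => G (m l.toFinset.card) l, ?_⟩
  intro h hh
  have hh' : h ∈ ⋃ n, Hs n := hun ▸ hh
  obtain ⟨_, ⟨n₀, rfl⟩, hn₀⟩ := hh'
  refine ⟨max n₀ (d n₀), ?_⟩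
  intro x hx t ht s hts
  set k := (seenSet x s).ncard with hk
  have hkt : max n₀ (d n₀) ≤ k := ht ▸ aux_seen_mono x hts
  have hn₀k : n₀ ≤ k := le_trans (le_max_left _ _) hkt
  have hdk : d n₀ ≤ k := le_trans (le_max_right _ _) hkt
  have hmk1 : n₀ ≤ m k := Nat.le_findGreatest hn₀k hdk
  have hmk2 : d (m k) ≤ k := Nat.findGreatest_spec (P := fun n => d n ≤ k) hn₀k hdk
  -- find a time t' ≤ s with exactly d (m k) distinct examples
  have hcount0 : (seenSet x 0).ncard = 0 := by
    simp [seenSet, Set.ncard_eq_zero]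
  obtain ⟨t', ht's, ht'⟩ := aux_ivt (fun t => (seenSet x t).ncard) hcount0
    (aux_seen_step x) s (d (m k)) (hk ▸ hmk2)
  have hmem : h ∈ Hs (m k) := hmono hmk1 hn₀
  have hgen : GenOK (G (m k)) h x s := hGd (m k) h hmem x hx t' ht' s ht's
  have hcard : (prefList x s).toFinset.card = k := by
    rw [hk, aux_seen_eq x s, Set.ncard_coe_finset]
  show G (m (prefList x s).toFinset.card) (prefList x s) ∈ h \ seenSet x s
  rw [hcard]
  exact hgen
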